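/- Let a ∈ ℝ with a < 0, and for b ∈ (a, 0) define F(b) = (a/b)^{b/(b−a)} − (a/b)^{a/(b−a)}, where the powers are real powers of the positive base a/b > 1. Then F is monotone nondecreasing on (a, 0): for all b₁, b₂ with a < b₁ ≤ b₂ < 0, F(b₁) ≤ F(b₂). In particular, for any b₀ ∈ (a, 0), the minimum of F over [b₀, 0) equals F(b₀). -/

import Mathlib

open Real

private noncomputable def phiF (t : ℝ) : ℝ := Real.log (t - 1) + (t / (1 - t)) * Real.log t

private lemma phi_hasDeriv {t : ℝ} (ht : 1 < t) :
    HasDerivAt phiF (Real.log t / (t - 1) ^ 2) t := by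
  have ht0 : (0:ℝ) < t := lt_trans one_pos ht
  have h1 : t - 1 ≠ 0 := by linarith
  have h2 : 1 - t ≠ 0 := by linarith
  have hlog : HasDerivAt (fun t : ℝ => Real.log (t - 1)) (1 / (t - 1)) t := by
    have := ((hasDerivAt_id t).sub_const 1).log h1
    simpa using this
  have hfrac : HasDerivAt (fun t : ℝ => t / (1 - t)) (1 / (1 - t) ^ 2) t := by
    have := (hasDerivAt_id t).div ((hasDerivAt_const t (1:ℝ)).sub (hasDerivAt_id t)) h2
    refine HasDerivAt.congr_deriv this ?_
    simp only [Pi.sub_apply, id]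
    ring
  have hlt : HasDerivAt (fun t : ℝ => Real.log t) (1 / t) t := by
    simpa using (hasDerivAt_id t).log (ne_of_gt ht0)
  have hmul : HasDerivAt (fun t : ℝ => (t / (1 - t)) * Real.log t)
      ((1 / (1 - t) ^ 2) * Real.log t + (t / (1 - t)) * (1 / t)) t := hfrac.mul hlt
  have := hlog.add hmul
  refine HasDerivAt.congr_deriv this ?_
  have ht0' : t ≠ 0 := ne_of_gt ht0
  field_simp
  ring

private lemma phi_strictMono : StrictMonoOn phiF (Set.Ioi 1) := by
  apply strictMonoOn_of_deriv_pos (convex_Ioi 1)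
  · intro t ht
    exact ((phi_hasDeriv ht).continuousAt).continuousWithinAt
  · intro t ht
    rw [interior_Ioi] at ht
    rw [(phi_hasDeriv ht).deriv]
    have ht1 : (1:ℝ) < t := ht
    have hl : 0 < Real.log t := Real.log_pos ht1
    have hsq : (0:ℝ) < (t - 1) ^ 2 := by nlinarith
    exact div_pos hl hsq

private lemma F_eq_exp_phi {a b : ℝ} (ha : a < b) (hb : b < 0) :
    (a / b) ^ (b / (b - a)) - (a / b) ^ (a / (b - a)) = Real.exp (phiF (a / b)) := by
  set t := a / b with htdef
  have hb0 : b ≠ 0 := ne_of_lt hb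
  have ht1 : 1 < t := (one_lt_div_of_neg hb).2 ha
  have ht0 : (0:ℝ) < t := lt_trans one_pos ht1
  have h2 : 1 - t ≠ 0 := by intro h; nlinarith
  have hba : b - a = b * (1 - t) := by rw [htdef]; field_simp
  have hb' : b / (b - a) = 1 / (1 - t) := by rw [hba]; field_simp
  have ha' : a / (b - a) = t / (1 - t) := by
    rw [hba, htdef]; field_simp
  have hexp : Real.exp (t / (1 - t) * Real.log t) = t ^ (t / (1 - t)) := by
    rw [mul_comm, ← Real.rpow_def_of_pos ht0]
  rw [hb', ha', phiF, Real.exp_add, Real.exp_log (by linarith : (0:ℝ) < t - 1), hexp]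
  have h1t : (1:ℝ) / (1 - t) = t / (1 - t) + 1 := by field_simp; ring
  rw [h1t, Real.rpow_add ht0, Real.rpow_one]
  ring

theorem F_monotone_and_min (a : ℝ) (ha : a < 0)
    (F : ℝ → ℝ)
    (hF : F = fun b => (a / b) ^ (b / (b - a)) - (a / b) ^ (a / (b - a))) :
    (∀ b₁ b₂ : ℝ, a < b₁ → b₁ ≤ b₂ → b₂ < 0 → F b₁ ≤ F b₂) ∧
    (∀ b₀ : ℝ, a < b₀ → b₀ < 0 → IsLeast (F '' Set.Ico b₀ 0) (F b₀)) := by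
  have key : ∀ b₁ b₂ : ℝ, a < b₁ → b₁ ≤ b₂ → b₂ < 0 → F b₁ ≤ F b₂ := by
    intro b₁ b₂ h1 h12 h2
    have h1' : b₁ < 0 := lt_of_le_of_lt h12 h2
    have h2' : a < b₂ := lt_of_lt_of_le h1 h12
    subst hF
    simp only
    rw [F_eq_exp_phi h1 h1', F_eq_exp_phi h2' h2]
    apply Real.exp_le_exp.2
    have ht1 : 1 < a / b₁ := (one_lt_div_of_neg h1').2 h1
    have ht2 : 1 < a / b₂ := (one_lt_div_of_neg h2).2 h2'
    have hle : a / b₁ ≤ a / b₂ := by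
      have hb1n : b₁ ≠ 0 := ne_of_lt h1'
      have hb2n : b₂ ≠ 0 := ne_of_lt h2
      have hdiff : a / b₂ - a / b₁ = a * (b₁ - b₂) / (b₁ * b₂) := by
        field_simp
      have hnum : 0 ≤ a * (b₁ - b₂) := by nlinarith
      have hden : 0 < b₁ * b₂ := mul_pos_of_neg_of_neg h1' h2
      have : 0 ≤ a * (b₁ - b₂) / (b₁ * b₂) := div_nonneg hnum (le_of_lt hden)
      linarith [hdiff ▸ this]
    exact phi_strictMono.monotoneOn (Set.mem_Ioi.2 ht1) (Set.mem_Ioi.2 ht2) hle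
  refine ⟨key, fun b₀ hab hb0 => ⟨⟨b₀, ⟨le_refl _, hb0⟩, rfl⟩, ?_⟩⟩
  rintro x ⟨b, ⟨hb1, hb2⟩, rfl⟩
  exact key b₀ b hab hb1 hb2
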